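/- For every nonnegative integer r, every n ∈ {2, …, N} and every f ∈ ℂ^N, one has the two-sided bound (2/π)^r · λ_n^{−r/2} ‖L^{r/2} P_n f‖₂ ≤ ‖(T_{λ_n^{−1/2}} − I)^r P_n f‖₂ ≤ λ_n^{−r/2} ‖L^{r/2} P_n f‖₂. -/

import Mathlib

open Matrix

noncomputable section

/-- Euclidean (2-)norm on `ℂ^N`. -/
def cnorm2 {N : ℕ} (f : Fin N → ℂ) : ℝ := Real.sqrt (∑ i, ‖f i‖ ^ 2)

/-- The spectral operator `Σ_j c_j u_j u_j^*`. -/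
def specOp {N : ℕ} (u : Fin N → Fin N → ℂ) (c : Fin N → ℂ) : Matrix (Fin N) (Fin N) ℂ :=
  ∑ j, c j • Matrix.vecMulVec (u j) (star (u j))

/-- The graph translation operator `T_s = Σ_j e^{i s √λ_j} u_j u_j^*`. -/
def Tmat {N : ℕ} (u : Fin N → Fin N → ℂ) (lam : Fin N → ℝ) (s : ℝ) :
    Matrix (Fin N) (Fin N) ℂ :=
  specOp u (fun j => Complex.exp (Complex.I * (s : ℂ) * (Real.sqrt (lam j) : ℂ)))

/-- The `r`-th modulus of smoothness `ω_r(f,t) = sup_{|s| ≤ t} ‖(T_s - I)^r f‖₂`. -/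
def omegaMod {N : ℕ} (u : Fin N → Fin N → ℂ) (lam : Fin N → ℝ) (r : ℕ) (f : Fin N → ℂ)
    (t : ℝ) : ℝ :=
  ⨆ s : {s : ℝ // |s| ≤ t}, cnorm2 (((Tmat u lam s.1 - 1) ^ r).mulVec f)

/-- Functional calculus power `L^x = Σ_j λ_j^x u_j u_j^*` (with `0^0 = 1`). -/
def Lpow {N : ℕ} (u : Fin N → Fin N → ℂ) (lam : Fin N → ℝ) (x : ℝ) :
    Matrix (Fin N) (Fin N) ℂ :=
  specOp u (fun j => ((lam j ^ x : ℝ) : ℂ))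

/-- Orthogonal projection `P_n = Σ_{j=1}^n u_j u_j^*` onto `span(u_1, …, u_n)`
(`u_k` corresponds to the index `k-1 : Fin N`). -/
def Pproj {N : ℕ} (u : Fin N → Fin N → ℂ) (n : ℕ) : Matrix (Fin N) (Fin N) ℂ :=
  specOp u (fun j => if (j : ℕ) < n then 1 else 0)

namespace StmtAux

variable {N : ℕ} (u : Fin N → Fin N → ℂ)
  (hu : ∀ i j, star (u i) ⬝ᵥ u j = if i = j then 1 else 0)

lemma vecMulVec_mul (w v w' v' : Fin N → ℂ) :
    Matrix.vecMulVec w v * Matrix.vecMulVec w' v'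
      = (v ⬝ᵥ w') • Matrix.vecMulVec w v' := by
  ext i j
  simp only [Matrix.mul_apply, Matrix.vecMulVec_apply, Matrix.smul_apply, dotProduct,
    smul_eq_mul, Finset.sum_mul]
  exact Finset.sum_congr rfl fun k _ => by ring

include hu in
lemma specOp_mul (c d : Fin N → ℂ) :
    specOp u c * specOp u d = specOp u (fun j => c j * d j) := by
  unfold specOp
  rw [Finset.sum_mul_sum]
  refine Finset.sum_congr rfl fun j _ => ?_
  rw [Finset.sum_eq_single j]
  · rw [smul_mul_assoc, mul_smul_comm, vecMulVec_mul, hu, if_pos rfl, one_smul, smul_smul]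
  · intro k _ hk
    rw [smul_mul_assoc, mul_smul_comm, vecMulVec_mul, hu,
      if_neg (fun h : j = k => hk h.symm), zero_smul, smul_zero, smul_zero]
  · intro h; exact absurd (Finset.mem_univ j) h

include hu in
lemma specOp_one : specOp u (fun _ => (1 : ℂ)) = 1 := by
  have h1 : (Matrix.of fun j i => u j i) * (Matrix.of fun j i => u j i)ᴴ = 1 := by
    ext j k
    simp only [Matrix.mul_apply, Matrix.conjTranspose_apply, Matrix.of_apply, Matrix.one_apply]
    have := hu k j
    simp only [dotProduct, Pi.star_apply] at this
    rw [show ∑ l, u j l * star (u k l) = ∑ l, star (u k l) * u j l from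
      Finset.sum_congr rfl fun l _ => mul_comm _ _, this]
    rcases eq_or_ne j k with h | h
    · simp [h]
    · rw [if_neg (fun hh : k = j => h hh.symm), if_neg h]
  have h2 : (Matrix.of fun j i => u j i)ᴴ * (Matrix.of fun j i => u j i) = 1 :=
    mul_eq_one_comm.mp h1
  ext i k
  have h3 := congrFun (congrFun h2 k) i
  simp only [Matrix.mul_apply, Matrix.conjTranspose_apply, Matrix.of_apply] at h3
  simp only [specOp, one_smul, Matrix.sum_apply, Matrix.smul_apply, Matrix.vecMulVec_apply,
    Pi.star_apply, smul_eq_mul, one_mul]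
  rw [show ∑ j, u j i * star (u j k) = ∑ j, star (u j k) * u j i from
    Finset.sum_congr rfl fun l _ => mul_comm _ _, h3]
  simp only [Matrix.one_apply]
  rcases eq_or_ne i k with h | h
  · simp [h]
  · rw [if_neg (fun hh : k = i => h hh.symm), if_neg h]

lemma specOp_sub (c d : Fin N → ℂ) :
    specOp u c - specOp u d = specOp u (fun j => c j - d j) := by
  simp [specOp, sub_smul, Finset.sum_sub_distrib]

include hu in
lemma specOp_pow (c : Fin N → ℂ) (r : ℕ) :
    (specOp u c) ^ r = specOp u (fun j => c j ^ r) := by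
  induction r with
  | zero => simp only [pow_zero]; exact (specOp_one u hu).symm
  | succ r ih =>
      rw [pow_succ, ih, specOp_mul u hu]
      simp only [← pow_succ]

lemma specOp_mulVec (c : Fin N → ℂ) (f : Fin N → ℂ) :
    (specOp u c).mulVec f = ∑ j, (c j * (star (u j) ⬝ᵥ f)) • u j := by
  ext i
  simp only [specOp, Matrix.mulVec, dotProduct, Finset.sum_apply, Pi.smul_apply,
    Matrix.sum_apply, Matrix.smul_apply, Matrix.vecMulVec_apply, Pi.star_apply, smul_eq_mul,
    Finset.sum_mul]
  rw [Finset.sum_comm]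
  refine Finset.sum_congr rfl fun j _ => ?_
  rw [Finset.mul_sum, Finset.sum_mul]
  refine Finset.sum_congr rfl fun k _ => by ring

include hu in
lemma sum_norm_sq_eq (b : Fin N → ℂ) :
    ∑ i, ‖(∑ j, b j • u j) i‖ ^ 2 = ∑ j, ‖b j‖ ^ 2 := by
  have key : ∑ i, ((starRingEnd ℂ) ((∑ j, b j • u j) i) * (∑ j, b j • u j) i)
      = ∑ j, ((starRingEnd ℂ) (b j) * b j) := by
    simp only [Finset.sum_apply, Pi.smul_apply, smul_eq_mul, map_sum, _root_.map_mul]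
    calc ∑ i, (∑ j, (starRingEnd ℂ) (b j) * (starRingEnd ℂ) (u j i))
            * (∑ k, b k * u k i)
        = ∑ i, ∑ j, ∑ k, ((starRingEnd ℂ) (b j) * (starRingEnd ℂ) (u j i)) * (b k * u k i) := by
          refine Finset.sum_congr rfl fun i _ => ?_
          rw [Finset.sum_mul_sum]
      _ = ∑ j, ∑ k, ((starRingEnd ℂ) (b j) * b k) * (∑ i, (starRingEnd ℂ) (u j i) * u k i) := by
          rw [Finset.sum_comm]
          refine Finset.sum_congr rfl fun j _ => ?_
          rw [Finset.sum_comm]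
          refine Finset.sum_congr rfl fun k _ => ?_
          rw [Finset.mul_sum]
          refine Finset.sum_congr rfl fun i _ => by ring
      _ = ∑ j, ((starRingEnd ℂ) (b j) * b j) := by
          refine Finset.sum_congr rfl fun j _ => ?_
          have h : ∀ k, (∑ i, (starRingEnd ℂ) (u j i) * u k i) = if j = k then 1 else 0 := by
            intro k
            have := hu j k
            simpa [dotProduct, Pi.star_apply] using this
          simp only [h, mul_ite, mul_one, mul_zero, Finset.sum_ite_eq, Finset.mem_univ, if_pos]
  have re1 : ∀ z : ℂ, ((starRingEnd ℂ) z * z).re = ‖z‖ ^ 2 := by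
    intro z
    rw [mul_comm, Complex.mul_conj, Complex.ofReal_re, Complex.normSq_eq_norm_sq]
  calc ∑ i, ‖(∑ j, b j • u j) i‖ ^ 2
      = (∑ i, ((starRingEnd ℂ) ((∑ j, b j • u j) i) * (∑ j, b j • u j) i)).re := by
        rw [Complex.re_sum]; exact (Finset.sum_congr rfl fun i _ => (re1 _).symm)
    _ = (∑ j, ((starRingEnd ℂ) (b j) * b j)).re := by rw [key]
    _ = ∑ j, ‖b j‖ ^ 2 := by
        rw [Complex.re_sum]; exact Finset.sum_congr rfl fun j _ => re1 _

include hu in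
lemma cnorm2_specOp (c : Fin N → ℂ) (f : Fin N → ℂ) :
    cnorm2 ((specOp u c).mulVec f)
      = Real.sqrt (∑ j, ‖c j‖ ^ 2 * ‖star (u j) ⬝ᵥ f‖ ^ 2) := by
  rw [specOp_mulVec, cnorm2, sum_norm_sq_eq u hu]
  simp [norm_mul, mul_pow]

lemma sqrt_sum_le (a b w : Fin N → ℝ) (K : ℝ) (hK : 0 ≤ K)
    (hw : ∀ j, 0 ≤ w j) (ha : ∀ j, 0 ≤ a j) (h : ∀ j, a j ≤ K * b j) :
    Real.sqrt (∑ j, a j ^ 2 * w j) ≤ K * Real.sqrt (∑ j, b j ^ 2 * w j) := by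
  have hsum : (0:ℝ) ≤ ∑ j, b j ^ 2 * w j :=
    Finset.sum_nonneg fun j _ => mul_nonneg (sq_nonneg _) (hw j)
  rw [← Real.sqrt_sq hK, ← Real.sqrt_mul (sq_nonneg K)]
  apply Real.sqrt_le_sqrt
  rw [Finset.mul_sum]
  refine Finset.sum_le_sum fun j _ => ?_
  have h2 : a j ^ 2 ≤ (K * b j) ^ 2 := pow_le_pow_left₀ (ha j) (h j) 2
  calc a j ^ 2 * w j ≤ (K * b j) ^ 2 * w j := mul_le_mul_of_nonneg_right h2 (hw j)
    _ = K ^ 2 * (b j ^ 2 * w j) := by ring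

lemma mul_sqrt_le (a b w : Fin N → ℝ) (K : ℝ) (hK : 0 ≤ K)
    (hw : ∀ j, 0 ≤ w j) (hb : ∀ j, 0 ≤ b j) (h : ∀ j, K * b j ≤ a j) :
    K * Real.sqrt (∑ j, b j ^ 2 * w j) ≤ Real.sqrt (∑ j, a j ^ 2 * w j) := by
  rw [← Real.sqrt_sq hK, ← Real.sqrt_mul (sq_nonneg K)]
  apply Real.sqrt_le_sqrt
  rw [Finset.mul_sum]
  refine Finset.sum_le_sum fun j _ => ?_
  have h2 : (K * b j) ^ 2 ≤ a j ^ 2 :=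
    pow_le_pow_left₀ (mul_nonneg hK (hb j)) (h j) 2
  calc K ^ 2 * (b j ^ 2 * w j) = (K * b j) ^ 2 * w j := by ring
    _ ≤ a j ^ 2 * w j := mul_le_mul_of_nonneg_right h2 (hw j)

lemma norm_exp_I_sub_one (θ : ℝ) :
    ‖Complex.exp (Complex.I * (θ : ℂ)) - 1‖ = 2 * |Real.sin (θ / 2)| := by
  have h : Complex.exp (Complex.I * (θ : ℂ)) - 1
      = ((Real.cos θ - 1 : ℝ) : ℂ) + ((Real.sin θ : ℝ) : ℂ) * Complex.I := by
    rw [mul_comm, Complex.exp_mul_I]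
    push_cast
    ring
  rw [h, Complex.norm_add_mul_I, Real.abs_sin_half]
  rw [show (Real.cos θ - 1) ^ 2 + Real.sin θ ^ 2 = 2 ^ 2 * ((1 - Real.cos θ) / 2) by
    nlinarith [Real.sin_sq_add_cos_sq θ]]
  rw [Real.sqrt_mul (by norm_num : (0:ℝ) ≤ (2:ℝ) ^ 2) ((1 - Real.cos θ) / 2),
    Real.sqrt_sq (by norm_num : (0:ℝ) ≤ (2:ℝ))]

lemma exp_bounds {θ : ℝ} (h0 : 0 ≤ θ) (h1 : θ ≤ 1) :
    2 / Real.pi * θ ≤ ‖Complex.exp (Complex.I * (θ : ℂ)) - 1‖ ∧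
    ‖Complex.exp (Complex.I * (θ : ℂ)) - 1‖ ≤ θ := by
  have hpi := Real.pi_gt_three
  rw [norm_exp_I_sub_one]
  have hs : 0 ≤ Real.sin (θ / 2) :=
    Real.sin_nonneg_of_nonneg_of_le_pi (by linarith) (by linarith)
  rw [abs_of_nonneg hs]
  constructor
  · have := Real.mul_le_sin (x := θ / 2) (by linarith) (by linarith)
    linarith
  · have := Real.sin_le (show (0:ℝ) ≤ θ / 2 by linarith)
    linarith

end StmtAux

open StmtAux in
/-- For every nonnegative integer `r`, every `n ∈ {2, …, N}` and every
`f ∈ ℂ^N`,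
`(2/π)^r λ_n^{-r/2} ‖L^{r/2} P_n f‖₂ ≤ ‖(T_{λ_n^{-1/2}} - I)^r P_n f‖₂ ≤ λ_n^{-r/2} ‖L^{r/2} P_n f‖₂`. -/
theorem stmt1
    (N : ℕ) (hN : 2 ≤ N)
    (u : Fin N → Fin N → ℂ)
    (hu : ∀ i j, star (u i) ⬝ᵥ u j = if i = j then 1 else 0)
    (lam : Fin N → ℝ) (hmono : Monotone lam)
    (hlam0 : lam ⟨0, by omega⟩ = 0) (hlam1 : 0 < lam ⟨1, by omega⟩)
    (r : ℕ) (n : ℕ) (hn2 : 2 ≤ n) (hnN : n ≤ N) (f : Fin N → ℂ) :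
    (2 / Real.pi) ^ r * lam ⟨n - 1, by omega⟩ ^ (-(r : ℝ) / 2) *
        cnorm2 ((Lpow u lam ((r : ℝ) / 2)).mulVec ((Pproj u n).mulVec f)) ≤
      cnorm2 (((Tmat u lam (lam ⟨n - 1, by omega⟩ ^ (-(1 : ℝ) / 2)) - 1) ^ r).mulVec
        ((Pproj u n).mulVec f)) ∧
    cnorm2 (((Tmat u lam (lam ⟨n - 1, by omega⟩ ^ (-(1 : ℝ) / 2)) - 1) ^ r).mulVec
        ((Pproj u n).mulVec f)) ≤
      lam ⟨n - 1, by omega⟩ ^ (-(r : ℝ) / 2) *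
        cnorm2 ((Lpow u lam ((r : ℝ) / 2)).mulVec ((Pproj u n).mulVec f)) := by
  have hpi := Real.pi_gt_three
  set m : Fin N := ⟨n - 1, by omega⟩ with hm
  set Λ : ℝ := lam m with hΛdef
  have hΛ : 0 < Λ := lt_of_lt_of_le hlam1 (hmono (show (⟨1, by omega⟩ : Fin N) ≤ m by
    simp only [Fin.mk_le_mk, hm]; omega))
  set s : ℝ := Λ ^ (-(1:ℝ)/2) with hsdef
  have hs0 : 0 ≤ s := Real.rpow_nonneg hΛ.le _
  have hsΛ : s * Real.sqrt Λ = 1 := by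
    rw [Real.sqrt_eq_rpow, hsdef, ← Real.rpow_add hΛ]
    norm_num
  -- coefficient functions
  set p : Fin N → ℂ := fun j => if (j : ℕ) < n then 1 else 0 with hp
  set e : Fin N → ℂ :=
    fun j => Complex.exp (Complex.I * (s : ℂ) * ((Real.sqrt (lam j) : ℝ) : ℂ)) - 1 with he
  set c : Fin N → ℂ := fun j => e j ^ r * p j with hc
  set d : Fin N → ℂ := fun j => ((lam j ^ ((r:ℝ)/2) : ℝ) : ℂ) * p j with hd
  -- matrix identities
  have hTm : ((Tmat u lam s - 1) ^ r) * Pproj u n = specOp u c := by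
    have h1 : Tmat u lam s - 1 = specOp u e := by
      rw [Tmat, show (1 : Matrix (Fin N) (Fin N) ℂ) = specOp u (fun _ => 1) from
        (specOp_one u hu).symm, specOp_sub]
    rw [h1, specOp_pow u hu, Pproj, specOp_mul u hu]
  have hLm : (Lpow u lam ((r:ℝ)/2)) * Pproj u n = specOp u d := by
    rw [Lpow, Pproj, specOp_mul u hu]
  have hTv : ((Tmat u lam s - 1) ^ r).mulVec ((Pproj u n).mulVec f)
      = (specOp u c).mulVec f := by rw [Matrix.mulVec_mulVec, hTm]
  have hLv : (Lpow u lam ((r:ℝ)/2)).mulVec ((Pproj u n).mulVec f)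
      = (specOp u d).mulVec f := by rw [Matrix.mulVec_mulVec, hLm]
  rw [hTv, hLv, cnorm2_specOp u hu, cnorm2_specOp u hu]
  -- exponent identities
  have hlamnn : ∀ j : Fin N, 0 ≤ lam j := by
    intro j
    have h := hmono (show (⟨0, by omega⟩ : Fin N) ≤ j from Fin.le_def.mpr (Nat.zero_le _))
    rw [hlam0] at h
    exact h
  have hΛr : Λ ^ (-(r:ℝ)/2) = s ^ r := by
    rw [show (-(r:ℝ)/2) = (-(1:ℝ)/2) * (r:ℝ) by ring, Real.rpow_mul hΛ.le,
      Real.rpow_natCast]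
  have hlamr : ∀ j : Fin N, lam j ^ ((r:ℝ)/2) = Real.sqrt (lam j) ^ r := by
    intro j
    rw [show ((r:ℝ)/2) = (1/2:ℝ) * (r:ℝ) by ring, Real.rpow_mul (hlamnn j),
      ← Real.sqrt_eq_rpow, Real.rpow_natCast]
  have hKnn : 0 ≤ Λ ^ (-(r:ℝ)/2) := Real.rpow_nonneg hΛ.le _
  have hK2nn : 0 ≤ (2 / Real.pi) ^ r * Λ ^ (-(r:ℝ)/2) :=
    mul_nonneg (pow_nonneg (by positivity) r) hKnn
  have hw : ∀ j : Fin N, (0:ℝ) ≤ ‖star (u j) ⬝ᵥ f‖ ^ 2 := fun j => sq_nonneg _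
  have key : ∀ j : Fin N, ‖c j‖ ≤ Λ ^ (-(r:ℝ)/2) * ‖d j‖ ∧
      ((2 / Real.pi) ^ r * Λ ^ (-(r:ℝ)/2)) * ‖d j‖ ≤ ‖c j‖ := by
    intro j
    by_cases hj : (j : ℕ) < n
    · have hp1 : p j = 1 := if_pos hj
      have hcj : ‖c j‖ = ‖e j‖ ^ r := by rw [hc]; simp [hp1, norm_pow]
      have hdj : ‖d j‖ = Real.sqrt (lam j) ^ r := by
        rw [hd]; simp only [hp1, mul_one, Complex.norm_real, Real.norm_eq_abs]
        rw [abs_of_nonneg (Real.rpow_nonneg (hlamnn j) _), hlamr j]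
      set θ : ℝ := s * Real.sqrt (lam j) with hθ
      have hθ0 : 0 ≤ θ := mul_nonneg hs0 (Real.sqrt_nonneg _)
      have hθ1 : θ ≤ 1 := by
        rw [← hsΛ]
        have hjm : j ≤ m := Fin.le_def.mpr (show (j : ℕ) ≤ n - 1 from by omega)
        exact mul_le_mul_of_nonneg_left (Real.sqrt_le_sqrt (hmono hjm)) hs0
      have harg : Complex.I * (s : ℂ) * ((Real.sqrt (lam j) : ℝ) : ℂ)
          = Complex.I * ((θ : ℝ) : ℂ) := by push_cast [hθ]; ring
      have hbnd := exp_bounds hθ0 hθ1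
      have hej : e j = Complex.exp (Complex.I * ((θ:ℝ):ℂ)) - 1 := by simp only [he]; rw [harg]
      have hmul : Λ ^ (-(r:ℝ)/2) * ‖d j‖ = θ ^ r := by
        rw [hdj, hΛr, hθ, mul_pow]
      constructor
      · rw [hcj, hmul, hej]
        exact pow_le_pow_left₀ (norm_nonneg _) hbnd.2 r
      · rw [hcj, hej]
        have : ((2 / Real.pi) ^ r * Λ ^ (-(r:ℝ)/2)) * ‖d j‖
            = (2 / Real.pi * θ) ^ r := by
          rw [mul_assoc, hmul, ← mul_pow]
        rw [this]
        exact pow_le_pow_left₀ (by positivity) hbnd.1 r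
    · have hp0 : p j = 0 := if_neg hj
      have hcj : c j = 0 := by rw [hc]; simp [hp0]
      have hdj : d j = 0 := by rw [hd]; simp [hp0]
      rw [hcj, hdj]
      simp
  constructor
  · exact mul_sqrt_le (fun j => ‖c j‖) (fun j => ‖d j‖) _ _ hK2nn hw
      (fun j => norm_nonneg _) (fun j => (key j).2)
  · exact sqrt_sum_le (fun j => ‖c j‖) (fun j => ‖d j‖) _ _ hKnn hw
      (fun j => norm_nonneg _) (fun j => (key j).1)
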